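/- Let P be a finite set of points in the Euclidean plane ℝ² and let y be any point of ℝ². Then there exists a minimum spanning tree T of P ∪ {y} such that for each i ∈ {0, …, 5}, at most one neighbour of y in T lies in the cone K_i(y), and if such a neighbour w exists then dist(y, w) ≤ dist(y, x) for every x ∈ P ∩ K_i(y). -/

import Mathlib

open scoped BigOperators

noncomputable section

/-- The Euclidean plane. -/
abbrev Pt : Type := EuclideanSpace ℝ (Fin 2)

/-- The length of an edge (an unordered pair of points): the Euclidean
distance between its endpoints. -/
def edgeLen : Sym2 Pt → ℝ :=
  Sym2.lift ⟨fun a b => dist a b, fun a b => dist_comm a b⟩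

/-- The total length of a graph on the plane: the sum of the Euclidean
lengths of its edges. -/
def glength (G : SimpleGraph Pt) : ℝ := ∑ᶠ e ∈ G.edgeSet, edgeLen e

/-- `G` is a spanning tree of the point set `V`: all its edges join points of
`V`, it is acyclic, and all points of `V` are pairwise connected in `G`. -/
def IsSpanningTreeOn (V : Set Pt) (G : SimpleGraph Pt) : Prop :=
  (∀ ⦃x y : Pt⦄, G.Adj x y → x ∈ V ∧ y ∈ V) ∧ G.IsAcyclic ∧
    ∀ x ∈ V, ∀ y ∈ V, G.Reachable x y

/-- `G` is a minimum spanning tree of the point set `V`. -/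
def IsMSTOn (V : Set Pt) (G : SimpleGraph Pt) : Prop :=
  IsSpanningTreeOn V G ∧
    ∀ H : SimpleGraph Pt, IsSpanningTreeOn V H → glength G ≤ glength H

/-- The `i`-th half-open cone of angle `π/3` apexed at `v`:
points `v + r·(cos θ, sin θ)` with `r > 0` and `θ ∈ [iπ/3, (i+1)π/3)`. -/
def cone (v : Pt) (i : Fin 6) : Set Pt :=
  { q | ∃ r : ℝ, 0 < r ∧ ∃ θ : ℝ,
      (i : ℕ) * Real.pi / 3 ≤ θ ∧ θ < ((i : ℕ) + 1) * Real.pi / 3 ∧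
      q = v + r • (WithLp.equiv 2 (Fin 2 → ℝ)).symm ![Real.cos θ, Real.sin θ] }

section Lemmas

open SimpleGraph

@[simp] lemma edgeLen_mk (a b : Pt) : edgeLen s(a, b) = dist a b := rfl

lemma edgeSet_finite_of_supp {V : Set Pt} (hV : V.Finite) {G : SimpleGraph Pt}
    (h : ∀ ⦃a b : Pt⦄, G.Adj a b → a ∈ V ∧ b ∈ V) : G.edgeSet.Finite := by
  apply Set.Finite.subset ((hV.prod hV).image (fun p => s(p.1, p.2)))
  rintro e he
  induction e with
  | _ a b =>
    rw [SimpleGraph.mem_edgeSet] at he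
    exact ⟨(a, b), ⟨(h he).1, (h he).2⟩, rfl⟩

lemma glength_sup_edge {G : SimpleGraph Pt} {a b : Pt} (hab : a ≠ b)
    (hfin : G.edgeSet.Finite) (hnadj : ¬ G.Adj a b) :
    glength (G ⊔ edge a b) = glength G + dist a b := by
  have hE : (G ⊔ edge a b).edgeSet = G.edgeSet ∪ {s(a, b)} := by
    rw [edgeSet_sup, edge_edgeSet_of_ne hab]
  have hdisj : Disjoint G.edgeSet ({s(a, b)} : Set (Sym2 Pt)) := by
    rw [Set.disjoint_singleton_right]
    exact fun hmem => hnadj hmem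
  rw [glength, hE, finsum_mem_union hdisj hfin (Set.finite_singleton _),
    finsum_mem_singleton, edgeLen_mk]
  rfl

lemma glength_deleteEdge {G : SimpleGraph Pt} {u v : Pt} (huv : G.Adj u v)
    (hfin : G.edgeSet.Finite) :
    glength G = glength (G.deleteEdges {s(u, v)}) + dist u v := by
  have hE : G.edgeSet = (G.edgeSet \ {s(u, v)}) ∪ {s(u, v)} := by
    rw [Set.diff_union_self, Set.union_eq_self_of_subset_right]
    rw [Set.singleton_subset_iff]; exact huv
  have hdisj : Disjoint (G.edgeSet \ {s(u, v)}) ({s(u, v)} : Set (Sym2 Pt)) :=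
    Set.disjoint_sdiff_left.mono_right le_rfl
  calc glength G = ∑ᶠ e ∈ (G.edgeSet \ {s(u, v)}) ∪ {s(u, v)}, edgeLen e := by
        rw [glength, ← hE]
    _ = glength (G.deleteEdges {s(u, v)}) + dist u v := by
        rw [finsum_mem_union hdisj (hfin.diff) (Set.finite_singleton _),
          finsum_mem_singleton, edgeLen_mk, glength, edgeSet_deleteEdges]

lemma isAcyclic_sup_edge {G : SimpleGraph Pt} (hG : G.IsAcyclic) {a b : Pt} (hab : a ≠ b)
    (hr : ¬ G.Reachable a b) : (G ⊔ edge a b).IsAcyclic := by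
  intro v c hc
  by_cases hmem : s(a, b) ∈ c.edges
  · have hadj' : (G ⊔ edge a b).Adj a b := by
      rw [sup_adj, edge_adj]; exact Or.inr ⟨Or.inl ⟨rfl, rfl⟩, hab⟩
    have hbridge : (G ⊔ edge a b).IsBridge s(a, b) := by
      rw [isBridge_iff]
      refine fun hreach => hr (hreach.mono ?_)
      intro x y hxy
      rw [deleteEdges_adj, sup_adj] at hxy
      obtain ⟨hor, hnot⟩ := hxy
      rcases hor with h | h
      · exact h
      · exfalso
        rw [edge_adj] at h
        apply hnot
        rw [Set.mem_singleton_iff]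
        rcases h.1 with ⟨rfl, rfl⟩ | ⟨rfl, rfl⟩
        · rfl
        · exact Sym2.eq_swap
    rw [isBridge_iff_adj_and_forall_cycle_notMem (G := G ⊔ edge a b) (e := s(a, b)) hadj'] at hbridge
    exact hbridge c hc hmem
  · have hsub : ∀ e ∈ c.edges, e ∈ G.edgeSet := by
      intro e he
      have h2 := c.edges_subset_edgeSet he
      rw [edgeSet_sup, edge_edgeSet_of_ne hab] at h2
      rcases h2 with h2 | h2
      · exact h2
      · rw [Set.mem_singleton_iff] at h2
        exact absurd (h2 ▸ he) hmem
    exact hG (c.transfer G hsub) (hc.transfer hsub)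

lemma reach_split {G : SimpleGraph Pt} (u v : Pt) {x z : Pt} (p : G.Walk x z) :
    (G.deleteEdges {s(u, v)}).Reachable x z ∨
      ((G.deleteEdges {s(u, v)}).Reachable x u ∧ (G.deleteEdges {s(u, v)}).Reachable v z) ∨
      ((G.deleteEdges {s(u, v)}).Reachable x v ∧ (G.deleteEdges {s(u, v)}).Reachable u z) := by
  set D := G.deleteEdges {s(u, v)} with hD
  induction p with
  | nil => exact Or.inl (Reachable.refl _)
  | @cons x x' z h p ih =>
    by_cases he : s(x, x') = s(u, v)
    · rw [Sym2.eq_iff] at he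
      rcases he with ⟨hx, hx'⟩ | ⟨hx, hx'⟩
      · subst hx; subst hx'
        rcases ih with h1 | ⟨h1, h2⟩ | ⟨h1, h2⟩
        · exact Or.inr (Or.inl ⟨Reachable.refl _, h1⟩)
        · exact Or.inl (h1.symm.trans h2)
        · exact Or.inl h2
      · subst hx; subst hx'
        rcases ih with h1 | ⟨h1, h2⟩ | ⟨h1, h2⟩
        · exact Or.inr (Or.inr ⟨Reachable.refl _, h1⟩)
        · exact Or.inl h2
        · exact Or.inl (h1.symm.trans h2)
    · have hD' : D.Adj x x' := by
        rw [hD, deleteEdges_adj]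
        exact ⟨h, by simpa using he⟩
      rcases ih with h1 | ⟨h1, h2⟩ | ⟨h1, h2⟩
      · exact Or.inl (hD'.reachable.trans h1)
      · exact Or.inr (Or.inl ⟨hD'.reachable.trans h1, h2⟩)
      · exact Or.inr (Or.inr ⟨hD'.reachable.trans h1, h2⟩)

lemma exchange {V : Set Pt} (hVfin : V.Finite) {T : SimpleGraph Pt}
    (hT : IsSpanningTreeOn V T) {u v a b : Pt} (hadj : T.Adj u v)
    (ha : a ∈ V) (hb : b ∈ V) (hab : a ≠ b)
    (hnr : ¬ (T.deleteEdges {s(u, v)}).Reachable a b) :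
    IsSpanningTreeOn V ((T.deleteEdges {s(u, v)}) ⊔ edge a b) ∧
      glength ((T.deleteEdges {s(u, v)}) ⊔ edge a b) = glength T - dist u v + dist a b := by
  obtain ⟨hVsupp, hacyc, hconn⟩ := hT
  set D := T.deleteEdges {s(u, v)} with hDdef
  have hDle : D ≤ T := deleteEdges_le _
  have hTfin : T.edgeSet.Finite := edgeSet_finite_of_supp hVfin hVsupp
  have hDfin : D.edgeSet.Finite := hTfin.subset (edgeSet_mono hDle)
  have hDnadj : ¬ D.Adj a b := fun h => hnr h.reachable
  have hDacyc : D.IsAcyclic := fun w c hc =>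
    hacyc (c.mapLe hDle) (hc.mapLe hDle)
  -- every vertex of V reaches u or v in D
  have hsplit : ∀ x ∈ V, D.Reachable x u ∨ D.Reachable x v := by
    intro x hx
    obtain ⟨p⟩ := hconn x hx u (hVsupp hadj).1
    rcases reach_split u v p with h1 | ⟨h1, h2⟩ | ⟨h1, h2⟩
    · exact Or.inl h1
    · exact Or.inl h1
    · exact Or.inr h1
  constructor
  · refine ⟨?_, isAcyclic_sup_edge hDacyc hab hnr, ?_⟩
    · intro x z hxz
      rcases (sup_adj _ _ _ _).mp hxz with h | h
      · exact hVsupp (hDle h)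
      · rw [edge_adj] at h
        rcases h.1 with ⟨rfl, rfl⟩ | ⟨rfl, rfl⟩
        · exact ⟨ha, hb⟩
        · exact ⟨hb, ha⟩
    · set G' := D ⊔ edge a b with hG'
      have hG'le : D ≤ G' := le_sup_left
      have hG'ab : G'.Reachable a b := by
        refine SimpleGraph.Adj.reachable ?_
        rw [hG', sup_adj, edge_adj]
        exact Or.inr ⟨Or.inl ⟨rfl, rfl⟩, hab⟩
      have key : ∀ x ∈ V, G'.Reachable x a := by
        intro x hx
        have hau_or := hsplit a ha
        have hbu_or := hsplit b hb
        have huv : G'.Reachable u v := by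
          rcases hau_or with hau | hav
          · rcases hbu_or with hbu | hbv
            · exact absurd (hau.trans hbu.symm) hnr
            · exact ((hau.mono hG'le).symm.trans hG'ab).trans (hbv.mono hG'le)
          · rcases hbu_or with hbu | hbv
            · exact ((hbu.mono hG'le).symm.trans hG'ab.symm).trans (hav.mono hG'le)
            · exact absurd (hav.trans hbv.symm) hnr
        rcases hsplit x hx with hxu | hxv
        · rcases hau_or with hau | hav
          · exact (hxu.mono hG'le).trans (hau.mono hG'le).symm
          · exact ((hxu.mono hG'le).trans huv).trans (hav.mono hG'le).symm
        · rcases hau_or with hau | hav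
          · exact ((hxv.mono hG'le).trans huv.symm).trans (hau.mono hG'le).symm
          · exact (hxv.mono hG'le).trans (hav.mono hG'le).symm
      intro x hx z hz
      exact (key x hx).trans (key z hz).symm
  · rw [glength_sup_edge hab hDfin hDnadj, glength_deleteEdge hadj hTfin, hDdef]
    ring

lemma adj_of_reachable_ne {G : SimpleGraph Pt} {x z : Pt} (h : G.Reachable x z)
    (hne : x ≠ z) : ∃ q, G.Adj q z := by
  obtain ⟨p⟩ := h
  cases hp : p.reverse with
  | nil => exact absurd rfl hne
  | cons h' q => exact ⟨_, h'.symm⟩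

lemma exists_spanning_tree (P : Finset Pt) (y : Pt) :
    ∃ T : SimpleGraph Pt, IsSpanningTreeOn (insert y ↑P) T := by
  classical
  induction P using Finset.induction with
  | empty =>
    refine ⟨⊥, fun x z h => absurd h (by simp), isAcyclic_bot, ?_⟩
    intro x hx z hz
    rw [Finset.coe_empty] at hx hz
    rcases hx with rfl | hx
    · rcases hz with rfl | hz
      · exact Reachable.refl _
      · exact absurd hz (Set.notMem_empty _)
    · exact absurd hx (Set.notMem_empty _)
  | @insert p P hp ih =>
    obtain ⟨T, hTsupp, hTacyc, hTconn⟩ := ih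
    by_cases hpy : p ∈ insert y (↑P : Set Pt)
    · refine ⟨T, ?_⟩
      have : insert y (↑(insert p P) : Set Pt) = insert y ↑P := by
        rw [Finset.coe_insert, Set.insert_comm, Set.insert_eq_self.mpr hpy]
      rw [this]
      exact ⟨hTsupp, hTacyc, hTconn⟩
    · have hpy' : p ≠ y := fun h => hpy (h ▸ Set.mem_insert _ _)
      have hnr : ¬ T.Reachable y p := by
        intro h
        obtain ⟨q, hq⟩ := adj_of_reachable_ne h (Ne.symm hpy')
        exact hpy (hTsupp hq).2
      refine ⟨T ⊔ SimpleGraph.edge y p, ?_, isAcyclic_sup_edge hTacyc (Ne.symm hpy') hnr, ?_⟩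
      · intro x z hxz
        have hset : insert y (↑(insert p P) : Set Pt) = insert p (insert y ↑P) := by
          rw [Finset.coe_insert, Set.insert_comm]
        rw [hset]
        rcases (sup_adj _ _ _ _).mp hxz with h | h
        · exact ⟨Set.mem_insert_of_mem _ (hTsupp h).1, Set.mem_insert_of_mem _ (hTsupp h).2⟩
        · rw [edge_adj] at h
          rcases h.1 with ⟨rfl, rfl⟩ | ⟨rfl, rfl⟩
          · exact ⟨Set.mem_insert_of_mem _ (Set.mem_insert _ _), Set.mem_insert _ _⟩
          · exact ⟨Set.mem_insert _ _, Set.mem_insert_of_mem _ (Set.mem_insert _ _)⟩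
      · have key : ∀ x ∈ insert y (↑(insert p P) : Set Pt),
            (T ⊔ SimpleGraph.edge y p).Reachable x y := by
          intro x hx
          rw [Finset.coe_insert, Set.insert_comm] at hx
          rcases hx with rfl | hx
          · refine SimpleGraph.Adj.reachable ?_
            rw [sup_adj, edge_adj]
            exact Or.inr ⟨Or.inr ⟨rfl, rfl⟩, hpy'⟩
          · exact (hTconn x hx y (Set.mem_insert _ _)).mono le_sup_left
        intro x hx z hz
        exact (key x hx).trans (key z hz).symm

lemma exists_MST (V : Set Pt) (hVfin : V.Finite)
    (hex : ∃ T : SimpleGraph Pt, IsSpanningTreeOn V T) :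
    ∃ T : SimpleGraph Pt, IsSpanningTreeOn V T ∧
      ∀ H : SimpleGraph Pt, IsSpanningTreeOn V H → glength T ≤ glength H := by
  classical
  set S : Set (SimpleGraph Pt) := {G | IsSpanningTreeOn V G} with hS
  have hSfin : S.Finite := by
    have himg : (SimpleGraph.edgeSet '' S) ⊆
        {E | E ⊆ Sym2.mk.uncurry '' (V ×ˢ V)} := by
      rintro _ ⟨G, hG, rfl⟩ e he
      induction e with
      | _ a b =>
        rw [SimpleGraph.mem_edgeSet] at he
        exact ⟨(a, b), ⟨(hG.1 he).1, (hG.1 he).2⟩, rfl⟩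
    have hfin2 : (SimpleGraph.edgeSet '' S).Finite :=
      Set.Finite.subset (Set.Finite.finite_subsets ((hVfin.prod hVfin).image _)) himg
    exact Set.Finite.of_finite_image hfin2
      (Set.injOn_of_injective SimpleGraph.edgeSet_injective)
  obtain ⟨T, hTS, hmin⟩ := Set.exists_min_image S glength hSfin hex
  exact ⟨T, hTS, fun H hH => hmin H hH⟩

end Lemmas

section Geom

open Real

lemma dist_cone_pt (v : Pt) (r : ℝ) (hr : 0 < r) (θ : ℝ) :
    dist v (v + r • (WithLp.equiv 2 (Fin 2 → ℝ)).symm ![Real.cos θ, Real.sin θ]) = r := by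
  rw [dist_eq_norm]
  have : v - (v + r • (WithLp.equiv 2 (Fin 2 → ℝ)).symm ![Real.cos θ, Real.sin θ])
      = -(r • (WithLp.equiv 2 (Fin 2 → ℝ)).symm ![Real.cos θ, Real.sin θ]) := by
    abel
  rw [this, norm_neg, EuclideanSpace.norm_eq]
  have h0 : ‖(r • (WithLp.equiv 2 (Fin 2 → ℝ)).symm ![Real.cos θ, Real.sin θ] : Pt) 0‖ = ‖r * Real.cos θ‖ := rfl
  have h1 : ‖(r • (WithLp.equiv 2 (Fin 2 → ℝ)).symm ![Real.cos θ, Real.sin θ] : Pt) 1‖ = ‖r * Real.sin θ‖ := rfl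
  rw [Fin.sum_univ_two, h0, h1]
  rw [Real.norm_eq_abs, Real.norm_eq_abs, sq_abs, sq_abs]
  have : (r * Real.cos θ) ^ 2 + (r * Real.sin θ) ^ 2 = r ^ 2 := by
    have := Real.sin_sq_add_cos_sq θ
    nlinarith
  rw [this, Real.sqrt_sq hr.le]

lemma mem_cone_dist {v w : Pt} {i : Fin 6} (h : w ∈ cone v i) :
    ∃ r θ : ℝ, 0 < r ∧ (i : ℕ) * Real.pi / 3 ≤ θ ∧ θ < ((i : ℕ) + 1) * Real.pi / 3 ∧
      dist v w = r ∧
      w = v + r • (WithLp.equiv 2 (Fin 2 → ℝ)).symm ![Real.cos θ, Real.sin θ] := by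
  obtain ⟨r, hr, θ, h1, h2, rfl⟩ := h
  exact ⟨r, θ, hr, h1, h2, dist_cone_pt v r hr θ, rfl⟩

lemma mem_cone_ne {v w : Pt} {i : Fin 6} (h : w ∈ cone v i) : w ≠ v := by
  obtain ⟨r, θ, hr, _, _, hd, _⟩ := mem_cone_dist h
  intro hw
  rw [hw, dist_self] at hd
  exact absurd hd.symm (ne_of_gt hr)

lemma cone_dist_lt {v w₁ w₂ : Pt} {i : Fin 6} (h1 : w₁ ∈ cone v i) (h2 : w₂ ∈ cone v i)
    (hle : dist v w₁ ≤ dist v w₂) : dist w₁ w₂ < dist v w₂ := by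
  obtain ⟨r₁, θ₁, hr₁, hl₁, hu₁, hd₁, hw₁⟩ := mem_cone_dist h1
  obtain ⟨r₂, θ₂, hr₂, hl₂, hu₂, hd₂, hw₂⟩ := mem_cone_dist h2
  rw [hd₁, hd₂] at hle
  rw [hd₂]
  -- cos (θ₁ - θ₂) > 1/2
  have hpi := Real.pi_pos
  have habs : |θ₁ - θ₂| < Real.pi / 3 := by
    rw [abs_lt]
    constructor <;> [nlinarith; nlinarith]
  have hcos : Real.cos (θ₁ - θ₂) > 1 / 2 := by
    have h3 : Real.pi / 3 ≤ Real.pi := by linarith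
    have := Real.cos_lt_cos_of_nonneg_of_le_pi (abs_nonneg (θ₁ - θ₂)) h3 habs
    rw [Real.cos_pi_div_three] at this
    rw [← Real.cos_abs]
    linarith
  rw [Real.cos_sub] at hcos
  -- compute the distance
  have hcoord : dist w₁ w₂ = Real.sqrt ((r₁ * Real.cos θ₁ - r₂ * Real.cos θ₂) ^ 2 +
      (r₁ * Real.sin θ₁ - r₂ * Real.sin θ₂) ^ 2) := by
    rw [hw₁, hw₂, dist_eq_norm]
    have heq : (v + r₁ • (WithLp.equiv 2 (Fin 2 → ℝ)).symm ![Real.cos θ₁, Real.sin θ₁]) -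
        (v + r₂ • (WithLp.equiv 2 (Fin 2 → ℝ)).symm ![Real.cos θ₂, Real.sin θ₂]) =
        r₁ • (WithLp.equiv 2 (Fin 2 → ℝ)).symm ![Real.cos θ₁, Real.sin θ₁] -
        r₂ • (WithLp.equiv 2 (Fin 2 → ℝ)).symm ![Real.cos θ₂, Real.sin θ₂] := by abel
    rw [heq, EuclideanSpace.norm_eq, Fin.sum_univ_two]
    have h0 : ‖((r₁ • (WithLp.equiv 2 (Fin 2 → ℝ)).symm ![Real.cos θ₁, Real.sin θ₁] -
        r₂ • (WithLp.equiv 2 (Fin 2 → ℝ)).symm ![Real.cos θ₂, Real.sin θ₂] : Pt)) 0‖ =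
        ‖r₁ * Real.cos θ₁ - r₂ * Real.cos θ₂‖ := rfl
    have h1 : ‖((r₁ • (WithLp.equiv 2 (Fin 2 → ℝ)).symm ![Real.cos θ₁, Real.sin θ₁] -
        r₂ • (WithLp.equiv 2 (Fin 2 → ℝ)).symm ![Real.cos θ₂, Real.sin θ₂] : Pt)) 1‖ =
        ‖r₁ * Real.sin θ₁ - r₂ * Real.sin θ₂‖ := rfl
    rw [h0, h1, Real.norm_eq_abs, Real.norm_eq_abs, sq_abs, sq_abs]
  rw [hcoord, Real.sqrt_lt' hr₂]
  have hs1 := Real.sin_sq_add_cos_sq θ₁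
  have hs2 := Real.sin_sq_add_cos_sq θ₂
  nlinarith [mul_pos hr₁ hr₂, mul_nonneg (sub_nonneg.mpr hle) hr₁.le]

end Geom

open SimpleGraph

theorem stmt4 (P : Finset Pt) (y : Pt) :
    ∃ T : SimpleGraph Pt, IsMSTOn (insert y ↑P) T ∧
      ∀ i : Fin 6,
        (∀ w₁ w₂ : Pt, T.Adj y w₁ → T.Adj y w₂ →
          w₁ ∈ cone y i → w₂ ∈ cone y i → w₁ = w₂) ∧
        ∀ w : Pt, T.Adj y w → w ∈ cone y i →
          ∀ x ∈ (P : Set Pt) ∩ cone y i, dist y w ≤ dist y x := by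
  classical
  set V : Set Pt := insert y ↑P with hV
  have hVfin : V.Finite := P.finite_toSet.insert y
  obtain ⟨T, hT, hmin⟩ := exists_MST V hVfin (exists_spanning_tree P y)
  refine ⟨T, ⟨hT, hmin⟩, ?_⟩
  intro i
  have hVsupp := hT.1
  have hacyc := hT.2.1
  have hbridge : ∀ ⦃w : Pt⦄, T.Adj y w →
      ¬ (T.deleteEdges {s(y, w)}).Reachable y w := by
    intro w hadj
    have hbr := isAcyclic_iff_forall_adj_isBridge.mp hacyc hadj
    rw [isBridge_iff] at hbr
    exact hbr
  constructor
  · -- at most one neighbour per cone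
    have main : ∀ w₁ w₂ : Pt, T.Adj y w₁ → T.Adj y w₂ →
        w₁ ∈ cone y i → w₂ ∈ cone y i → w₁ ≠ w₂ →
        dist y w₁ ≤ dist y w₂ → False := by
      intro w₁ w₂ hadj₁ hadj₂ hc₁ hc₂ hne hle
      set D := T.deleteEdges {s(y, w₂)} with hD
      have hDadj₁ : D.Adj y w₁ := by
        rw [hD, deleteEdges_adj]
        refine ⟨hadj₁, ?_⟩
        simp only [Set.mem_singleton_iff, Sym2.eq_iff]
        rintro (⟨-, rfl⟩ | ⟨rfl, -⟩)
        · exact hne rfl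
        · exact hadj₂.ne rfl
      have hnr : ¬ D.Reachable w₁ w₂ := fun h =>
        hbridge hadj₂ (hDadj₁.reachable.trans h)
      obtain ⟨hst, hlen⟩ := exchange hVfin hT hadj₂ (hVsupp hadj₁).2 (hVsupp hadj₂).2 hne hnr
      have := hmin _ hst
      have hdlt := cone_dist_lt hc₁ hc₂ hle
      rw [hlen] at this
      linarith
    intro w₁ w₂ h1 h2 hc1 hc2
    by_contra hne
    rcases le_total (dist y w₁) (dist y w₂) with hle | hle
    · exact main w₁ w₂ h1 h2 hc1 hc2 hne hle
    · exact main w₂ w₁ h2 h1 hc2 hc1 (Ne.symm hne) hle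
  · -- nearest in cone
    rintro w hadj hcw x ⟨hxP, hxc⟩
    by_contra hgt
    push_neg at hgt
    set D := T.deleteEdges {s(y, w)} with hD
    have hxV : x ∈ V := Set.mem_insert_of_mem _ hxP
    have hwV : w ∈ V := (hVsupp hadj).2
    have hyV : y ∈ V := Set.mem_insert _ _
    have hxy : y ≠ x := Ne.symm (mem_cone_ne hxc)
    have hxw : x ≠ w := fun h => by rw [h] at hgt; exact lt_irrefl _ hgt
    by_cases hreach : D.Reachable x w
    · have hnr : ¬ D.Reachable y x := fun h => hbridge hadj (h.trans hreach)
      obtain ⟨hst, hlen⟩ := exchange hVfin hT hadj hyV hxV hxy hnr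
      have := hmin _ hst
      rw [hlen] at this
      linarith
    · obtain ⟨hst, hlen⟩ := exchange hVfin hT hadj hxV hwV hxw hreach
      have := hmin _ hst
      have hdlt := cone_dist_lt hxc hcw hgt.le
      rw [hlen] at this
      linarith

end
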